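/- For the dihedral group G = D₂ₙ = ⟨g, h | hⁿ = g² = (gh)² = 1⟩, the combination {1} − ⟨g⟩ − ⟨gh⟩ − ⟨h⟩ + 2·G is a G-relation, i.e. ℂ[G] ⊕ ℂ[G/G]^{⊕2} ≅ ℂ[G/⟨g⟩] ⊕ ℂ[G/⟨gh⟩] ⊕ ℂ[G/⟨h⟩] as complex representations. -/

import Mathlib

open scoped BigOperators

/-- The permutation character of `G` acting on the left cosets `G / H`:
its value at `g` is the number of fixed points of `g` on `G / H`, i.e. the character
of the complex permutation representation `C[G/H]`. -/
noncomputable def permChar {G : Type*} [Group G] (H : Subgroup G) (g : G) : ℤ :=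
  Nat.card {x : G ⧸ H // g • x = x}

section Generic

variable {G : Type*} [Group G]

lemma smul_coset_eq_iff (H : Subgroup G) (x y : G) :
    x • (y : G ⧸ H) = (y : G ⧸ H) ↔ y⁻¹ * x * y ∈ H := by
  rw [MulAction.Quotient.smul_coe, smul_eq_mul, QuotientGroup.eq]
  rw [show (x * y)⁻¹ * y = (y⁻¹ * x * y)⁻¹ by group, H.inv_mem_iff]

lemma permChar_one (H : Subgroup G) : permChar H 1 = Nat.card (G ⧸ H) := by
  unfold permChar
  congr 1
  exact Nat.card_congr (Equiv.subtypeUnivEquiv fun q => one_smul _ q)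

lemma permChar_eq_card (H : Subgroup G) (x : G) (h : ∀ y : G, y⁻¹ * x * y ∈ H) :
    permChar H x = Nat.card (G ⧸ H) := by
  unfold permChar
  congr 1
  refine Nat.card_congr (Equiv.subtypeUnivEquiv fun q => ?_)
  obtain ⟨y, rfl⟩ := QuotientGroup.mk_surjective q
  exact (smul_coset_eq_iff H x y).mpr (h y)

lemma permChar_eq_zero (H : Subgroup G) (x : G) (h : ∀ y : G, y⁻¹ * x * y ∉ H) :
    permChar H x = 0 := by
  unfold permChar
  norm_cast
  rw [Nat.card_eq_zero]
  left
  constructor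
  rintro ⟨q, hq⟩
  obtain ⟨y, rfl⟩ := QuotientGroup.mk_surjective q
  exact h y ((smul_coset_eq_iff H x y).mp hq)

lemma card_quot_bot : Nat.card (G ⧸ (⊥ : Subgroup G)) = Nat.card G :=
  Nat.card_congr QuotientGroup.quotientBot.toEquiv

lemma card_quot_top : Nat.card (G ⧸ (⊤ : Subgroup G)) = 1 :=
  Nat.card_eq_one_iff_unique.mpr ⟨QuotientGroup.subsingleton_quotient_top, ⟨1⟩⟩

end Generic

section ZModCount

lemma my_cast_val {N : ℕ} [NeZero N] (x : ZMod N) : ((x.val : ℕ) : ZMod N) = x := by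
  rw [ZMod.natCast_val, ZMod.cast_id]

lemma two_mul_eq_zero {m : ℕ} (hm : m ≠ 0) (x : ZMod (2*m)) (hx : 2*x = 0) :
    x = 0 ∨ x = (m : ZMod (2*m)) := by
  haveI : NeZero (2*m) := ⟨by omega⟩
  have h1 : ((2 * x.val : ℕ) : ZMod (2*m)) = 0 := by
    push_cast
    rw [my_cast_val]
    exact hx
  rw [ZMod.natCast_eq_zero_iff] at h1
  obtain ⟨c, hc⟩ := h1
  have hc' : 2 * x.val = 2 * (m * c) := by rw [hc]; ring
  have hval : x.val = m * c := by omega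
  have hlt := x.val_lt
  have hc2 : c < 2 := by
    by_contra hge
    push_neg at hge
    have : m * 2 ≤ m * c := Nat.mul_le_mul_left m hge
    omega
  interval_cases c
  · left
    have h0 : x.val = 0 := by omega
    rw [← my_cast_val x, h0, Nat.cast_zero]
  · right
    rw [← my_cast_val x, hval, mul_one]

lemma sol_card_of_even {m : ℕ} (hm : m ≠ 0) (t : ZMod (2*m)) (ht : 2 ∣ t.val) :
    Nat.card {j : ZMod (2*m) // 2*j = t} = 2 := by
  haveI : NeZero (2*m) := ⟨by omega⟩
  obtain ⟨k, hk⟩ := ht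
  have htc : ((2*k : ℕ) : ZMod (2*m)) = t := by rw [← hk, my_cast_val]
  have h2m : ((2*m : ℕ) : ZMod (2*m)) = 0 := ZMod.natCast_self _
  have key : ∀ j : ZMod (2*m), 2*j = t ↔ j = (k : ZMod (2*m)) ∨ j = (k : ZMod (2*m)) + m := by
    intro j
    constructor
    · intro hj
      have h0 : 2 * (j - k) = 0 := by
        push_cast at htc ⊢
        rw [mul_sub, hj, ← htc]
        ring
      rcases two_mul_eq_zero hm _ h0 with h | h
      · left; exact sub_eq_zero.mp h
      · right
        have hj2 : j = (m : ZMod (2*m)) + k := by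
          rw [← h]; ring
        rw [hj2]; ring
    · rintro (rfl | rfl)
      · push_cast at htc ⊢; rw [← htc]
      · push_cast at htc h2m ⊢
        rw [mul_add, ← htc, h2m]
        ring
  rw [Nat.card_eq_fintype_card, Fintype.card_subtype]
  have hset : Finset.filter (fun j : ZMod (2*m) => 2*j = t) Finset.univ
      = {(k : ZMod (2*m)), (k : ZMod (2*m)) + m} := by
    ext j
    simp [key j]
  rw [hset, Finset.card_pair]
  intro hkm
  have h0 : (m : ZMod (2*m)) = 0 := by
    have := hkm.symm
    rwa [add_eq_left] at this
  rw [ZMod.natCast_eq_zero_iff] at h0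
  have := Nat.le_of_dvd (by omega) h0
  omega

lemma sol_card_of_odd {m : ℕ} (hm : m ≠ 0) (t : ZMod (2*m)) (ht : ¬ 2 ∣ t.val) :
    Nat.card {j : ZMod (2*m) // 2*j = t} = 0 := by
  haveI : NeZero (2*m) := ⟨by omega⟩
  rw [Nat.card_eq_zero]
  left
  constructor
  rintro ⟨j, hj⟩
  apply ht
  have h1 : ((2*j.val : ℕ) : ZMod (2*m)) = t := by
    push_cast
    rw [my_cast_val]
    exact hj
  have h2 : t.val = (2*j.val) % (2*m) := by rw [← h1, ZMod.val_natCast]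
  rw [h2]
  exact (Nat.dvd_mod_iff ⟨m, rfl⟩).mpr ⟨j.val, rfl⟩

lemma key_count (n : ℕ) (hn : 0 < n) (t : ZMod n) :
    Nat.card {j : ZMod n // 2*j = t} + Nat.card {j : ZMod n // 2*j = t + 1} = 2 := by
  haveI : NeZero n := ⟨hn.ne'⟩
  rcases Nat.even_or_odd n with ⟨m, hm⟩ | hodd
  · have hm2 : n = 2 * m := by omega
    subst hm2
    have hm0 : m ≠ 0 := by omega
    have hval1 : (t + 1).val = (t.val + 1) % (2*m) := by
      have h : ((t.val + 1 : ℕ) : ZMod (2*m)) = t + 1 := by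
        push_cast
        rw [my_cast_val]
      rw [← h, ZMod.val_natCast]
    have hdvd : (2 ∣ (t+1).val) ↔ ¬ (2 ∣ t.val) := by
      rw [hval1, Nat.dvd_mod_iff ⟨m, rfl⟩]
      omega
    by_cases h : 2 ∣ t.val
    · rw [sol_card_of_even hm0 t h, sol_card_of_odd hm0 (t+1) (by simp [hdvd, h])]
    · rw [sol_card_of_odd hm0 t h, sol_card_of_even hm0 (t+1) (hdvd.mpr h)]
  · have hcop : IsUnit (2 : ZMod n) := by
      rw [show (2 : ZMod n) = ((2:ℕ) : ZMod n) by push_cast; ring, ZMod.isUnit_iff_coprime]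
      rw [Nat.prime_two.coprime_iff_not_dvd]
      rintro ⟨c, hc⟩
      obtain ⟨d, hd⟩ := hodd
      omega
    obtain ⟨v, hv⟩ := hcop
    have hu : ∃ u : ZMod n, 2 * u = 1 := ⟨↑v⁻¹, by rw [← hv]; exact v.mul_inv⟩
    obtain ⟨u, hu⟩ := hu
    have gen : ∀ s : ZMod n, Nat.card {j : ZMod n // 2*j = s} = 1 := by
      intro s
      rw [Nat.card_eq_one_iff_unique]
      constructor
      · constructor
        rintro ⟨a, ha⟩ ⟨b, hb⟩
        ext
        calc a = (2*u)*a := by rw [hu, one_mul]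
          _ = u*(2*a) := by ring
          _ = u*(2*b) := by rw [ha, hb]
          _ = (2*u)*b := by ring
          _ = b := by rw [hu, one_mul]
      · refine ⟨⟨u*s, ?_⟩⟩
        calc 2*(u*s) = (2*u)*s := by ring
          _ = s := by rw [hu, one_mul]
    rw [gen, gen]

end ZModCount

section Dihedral

open DihedralGroup Subgroup

variable {n : ℕ}

@[simp] lemma inv_r (j : ZMod n) : (r j)⁻¹ = r (-j) :=
  inv_eq_of_mul_eq_one_right (by rw [r_mul_r, add_neg_cancel]; rfl)

@[simp] lemma inv_sr (j : ZMod n) : (sr j)⁻¹ = sr j :=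
  inv_eq_of_mul_eq_one_right (sr_mul_self j)

lemma mem_zpowers_sr_iff {a : ZMod n} {x : DihedralGroup n} :
    x ∈ zpowers (sr a) ↔ x = 1 ∨ x = sr a := by
  constructor
  · rintro ⟨k, rfl⟩
    have h2 : (sr a : DihedralGroup n) ^ (2:ℤ) = 1 := by
      rw [show (2:ℤ) = ((2:ℕ):ℤ) from rfl, zpow_natCast, pow_two, sr_mul_self]
    rcases Int.even_or_odd k with ⟨q, hq⟩ | ⟨q, hq⟩
    · left
      show (sr a : DihedralGroup n) ^ k = 1
      rw [hq, show q + q = 2*q by ring, zpow_mul, h2, one_zpow]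
    · right
      show (sr a : DihedralGroup n) ^ k = sr a
      rw [hq, zpow_add, zpow_mul, h2, one_zpow, zpow_one, one_mul]
  · rintro (rfl | rfl)
    · exact one_mem _
    · exact mem_zpowers _

lemma r_mem_zpowers_r_one [NeZero n] (i : ZMod n) : r i ∈ zpowers (r 1) := by
  refine ⟨(i.val : ℤ), ?_⟩
  show (r 1 : DihedralGroup n) ^ ((i.val : ℕ) : ℤ) = r i
  rw [zpow_natCast, r_one_pow, my_cast_val]

lemma sr_not_mem_zpowers_r_one (i : ZMod n) : sr i ∉ zpowers (r 1) := by
  rintro ⟨k, hk⟩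
  have hk' : (r 1 : DihedralGroup n) ^ k = sr i := hk
  obtain ⟨j, hj⟩ : ∃ j : ZMod n, (r 1 : DihedralGroup n) ^ k = r j := by
    rcases k with k | k
    · exact ⟨k, by rw [Int.ofNat_eq_coe, zpow_natCast, r_one_pow]⟩
    · refine ⟨-(k+1 : ℕ), ?_⟩
      rw [zpow_negSucc, r_one_pow, _root_.inv_r]
  rw [hj] at hk'
  exact absurd hk' (by simp)

lemma card_quot_zpowers_sr [NeZero n] (a : ZMod n) :
    Nat.card (DihedralGroup n ⧸ zpowers (sr a)) = n := by
  have h := Subgroup.card_eq_card_quotient_mul_card_subgroup (zpowers (sr a))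
  rw [nat_card, Nat.card_zpowers, orderOf_sr] at h
  omega

lemma card_quot_zpowers_r_one [NeZero n] (hn : 0 < n) :
    Nat.card (DihedralGroup n ⧸ zpowers (r 1)) = 2 := by
  have h := Subgroup.card_eq_card_quotient_mul_card_subgroup (zpowers (r 1 : DihedralGroup n))
  rw [nat_card, Nat.card_zpowers, orderOf_r_one] at h
  exact Nat.eq_of_mul_eq_mul_right hn h.symm

lemma exists_rot_rep (a : ZMod n) (q : DihedralGroup n ⧸ zpowers (sr a)) :
    ∃ j : ZMod n, q = ((r j : DihedralGroup n) : DihedralGroup n ⧸ zpowers (sr a)) := by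
  obtain ⟨y, rfl⟩ := QuotientGroup.mk_surjective q
  rcases y with j | j
  · exact ⟨j, rfl⟩
  · refine ⟨a - j, QuotientGroup.eq.mpr ?_⟩
    rw [mem_zpowers_sr_iff]
    right
    rw [_root_.inv_sr, sr_mul_r]
    congr 1
    ring

lemma permChar_zpowers_sr [NeZero n] (a i : ZMod n) :
    permChar (zpowers (sr a)) (sr i) = (Nat.card {j : ZMod n // 2*j = a - i} : ℤ) := by
  unfold permChar
  congr 1
  refine Nat.card_congr (Equiv.ofBijective
    (fun p : {j : ZMod n // 2*j = a - i} =>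
      (⟨((r p.1 : DihedralGroup n) : DihedralGroup n ⧸ zpowers (sr a)), ?_⟩ :
        {x : DihedralGroup n ⧸ zpowers (sr a) // sr i • x = x})) ⟨?_, ?_⟩).symm
  · rw [smul_coset_eq_iff, mem_zpowers_sr_iff]
    right
    rw [_root_.inv_r, r_mul_sr, sr_mul_r]
    congr 1
    linear_combination p.2
  · rintro ⟨j, hj⟩ ⟨j', hj'⟩ h
    rw [Subtype.mk.injEq, QuotientGroup.eq, _root_.inv_r, r_mul_r, mem_zpowers_sr_iff] at h
    rcases h with h | h
    · rw [one_def] at h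
      have h0 : -j + j' = 0 := by injection h
      ext
      linear_combination -h0
    · exact absurd h (by simp)
  · rintro ⟨q, hq⟩
    obtain ⟨j, rfl⟩ := exists_rot_rep a q
    rw [smul_coset_eq_iff, _root_.inv_r, r_mul_sr, sr_mul_r, mem_zpowers_sr_iff] at hq
    rcases hq with h | h
    · rw [one_def] at h
      exact absurd h (by intro h'; cases h')
    · have h0 : i - -j + j = a := by injection h
      exact ⟨⟨j, by linear_combination h0⟩, rfl⟩

end Dihedral

/-- For the dihedral group G = D_2n with presentation < g, h | h^n = g^2 = (gh)^2 = 1 >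
(realised as Mathlib's DihedralGroup n, with g = sr 0 a reflection and h = r 1 the
basic rotation), the combination `{1} - <g> - <gh> - <h> + 2 G` is a G-relation:
`C[G] + 2 C[G/G] = C[G/<g>] + C[G/<gh>] + C[G/<h>]` as virtual complex
representations, expressed as an equality of permutation characters. -/
theorem dihedral_relation (n : ℕ) (hn : 0 < n) :
    ∀ x : DihedralGroup n,
      permChar (⊥ : Subgroup (DihedralGroup n)) x
          + 2 * permChar (⊤ : Subgroup (DihedralGroup n)) x
        = permChar (Subgroup.zpowers (DihedralGroup.sr 0)) x
            + permChar (Subgroup.zpowers (DihedralGroup.sr 0 * DihedralGroup.r 1)) x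
            + permChar (Subgroup.zpowers (DihedralGroup.r 1)) x := by
  haveI : NeZero n := ⟨hn.ne'⟩
  intro x
  open DihedralGroup Subgroup in
  have hsr1 : (sr 0 : DihedralGroup n) * r 1 = sr 1 := by
    rw [sr_mul_r, zero_add]
  rw [hsr1]
  open DihedralGroup Subgroup in
  have htop : permChar (⊤ : Subgroup (DihedralGroup n)) x = 1 := by
    rw [permChar_eq_card _ _ (fun y => Subgroup.mem_top _), card_quot_top]
    norm_num
  open DihedralGroup Subgroup in
  rcases x with i | i
  · by_cases hi : i = 0
    · subst hi
      rw [show (r 0 : DihedralGroup n) = 1 from one_def.symm] at htop ⊢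
      rw [htop, permChar_one, permChar_one, permChar_one, permChar_one,
        card_quot_bot, nat_card, card_quot_zpowers_sr, card_quot_zpowers_sr,
        card_quot_zpowers_r_one hn]
      push_cast
      ring
    · have hbot : permChar (⊥ : Subgroup (DihedralGroup n)) (r i) = 0 := by
        apply permChar_eq_zero
        intro y h
        rw [Subgroup.mem_bot] at h
        apply hi
        have hconj : r i = y * (y⁻¹ * r i * y) * y⁻¹ := by group
        rw [h, mul_one, mul_inv_cancel] at hconj
        rw [one_def] at hconj
        injection hconj
      have hsr : ∀ a : ZMod n, permChar (zpowers (sr a)) (r i) = 0 := by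
        intro a
        apply permChar_eq_zero
        rintro (j | j) h <;>
          rw [mem_zpowers_sr_iff] at h <;>
          rcases h with h | h <;>
          simp only [_root_.inv_r, _root_.inv_sr, r_mul_r, r_mul_sr, sr_mul_r, sr_mul_sr, one_def] at h
        · apply hi
          have h0 : -j + i + j = 0 := by injection h
          linear_combination h0
        · exact absurd h (by simp)
        · apply hi
          have h0 : j - (j + i) = 0 := by injection h
          linear_combination -h0
        · exact absurd h (by simp)
      have hr1 : permChar (zpowers (r 1 : DihedralGroup n)) (r i) = 2 := by
        rw [permChar_eq_card _ _ ?_, card_quot_zpowers_r_one hn]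
        · norm_num
        · rintro (j | j) <;>
            simp only [_root_.inv_r, _root_.inv_sr, r_mul_r, r_mul_sr, sr_mul_r, sr_mul_sr] <;>
            exact r_mem_zpowers_r_one _
      rw [hbot, htop, hsr 0, hsr 1, hr1]
      norm_num
  · have hbot : permChar (⊥ : Subgroup (DihedralGroup n)) (sr i) = 0 := by
      apply permChar_eq_zero
      intro y h
      rw [Subgroup.mem_bot] at h
      have hconj : sr i = y * (y⁻¹ * sr i * y) * y⁻¹ := by group
      rw [h, mul_one, mul_inv_cancel] at hconj
      rw [one_def] at hconj
      exact absurd hconj (by intro h'; cases h')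
    have hr1 : permChar (zpowers (r 1 : DihedralGroup n)) (sr i) = 0 := by
      apply permChar_eq_zero
      rintro (j | j) <;>
        simp only [_root_.inv_r, _root_.inv_sr, r_mul_r, r_mul_sr, sr_mul_r, sr_mul_sr] <;>
        exact sr_not_mem_zpowers_r_one _
    rw [hbot, htop, hr1, permChar_zpowers_sr 0 i, permChar_zpowers_sr 1 i]
    have hkey := key_count n hn (0 - i)
    rw [show (0 : ZMod n) - i + 1 = 1 - i by ring] at hkey
    omega
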